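/- arXiv:1006.5326 — 5 statements merged into one kernel-verified Lean document; each statement's English description precedes it below -/
import Mathlib

section
/- Let m be a positive integer and let B_1, ..., B_m be real skew-symmetric 3×3 matrices. Then Σ_{r,s=1}^m ‖[B_r,B_s]‖² ≤ (1/3)·(Σ_{r=1}^m ‖B_r‖²)². -/
open Matrix BigOperators

/-- Squared Frobenius norm of a real square matrix. -/
def frobSq {n : ℕ} (A : Matrix (Fin n) (Fin n) ℝ) : ℝ := ∑ i, ∑ j, (A i j) ^ 2

/-- Commutator of two square matrices. -/
def matComm {n : ℕ} (A B : Matrix (Fin n) (Fin n) ℝ) : Matrix (Fin n) (Fin n) ℝ :=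
  A * B - B * A

lemma skew_entries (A : Matrix (Fin 3) (Fin 3) ℝ) (hA : Aᵀ = -A) :
    A 0 0 = 0 ∧ A 1 1 = 0 ∧ A 2 2 = 0 ∧ A 1 0 = -A 0 1 ∧ A 2 0 = -A 0 2 ∧
      A 2 1 = -A 1 2 := by
  have h := fun i j => congrFun (congrFun hA i) j
  simp only [Matrix.transpose_apply, Matrix.neg_apply] at h
  refine ⟨by linarith [h 0 0], by linarith [h 1 1], by linarith [h 2 2],
    h 0 1, h 0 2, h 1 2⟩

lemma frob_comm_skew (A C : Matrix (Fin 3) (Fin 3) ℝ) (hA : Aᵀ = -A) (hC : Cᵀ = -C) :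
    frobSq (matComm A C) =
      2 * ((A 0 1 ^ 2 + A 0 2 ^ 2 + A 1 2 ^ 2) * (C 0 1 ^ 2 + C 0 2 ^ 2 + C 1 2 ^ 2))
        - 2 * (A 0 1 ^ 2 * C 0 1 ^ 2) - 2 * (A 0 2 ^ 2 * C 0 2 ^ 2)
        - 2 * (A 1 2 ^ 2 * C 1 2 ^ 2)
        - 4 * ((A 0 1 * A 0 2) * (C 0 1 * C 0 2))
        - 4 * ((A 0 1 * A 1 2) * (C 0 1 * C 1 2))
        - 4 * ((A 0 2 * A 1 2) * (C 0 2 * C 1 2)) := by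
  obtain ⟨a00, a11, a22, a10, a20, a21⟩ := skew_entries A hA
  obtain ⟨c00, c11, c22, c10, c20, c21⟩ := skew_entries C hC
  simp only [frobSq, matComm, Matrix.sub_apply, Matrix.mul_apply, Fin.sum_univ_three,
    a00, a11, a22, a10, a20, a21, c00, c11, c22, c10, c20, c21]
  ring

lemma frob_skew (A : Matrix (Fin 3) (Fin 3) ℝ) (hA : Aᵀ = -A) :
    frobSq A = 2 * (A 0 1 ^ 2 + A 0 2 ^ 2 + A 1 2 ^ 2) := by
  obtain ⟨a00, a11, a22, a10, a20, a21⟩ := skew_entries A hA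
  simp only [frobSq, Fin.sum_univ_three, a00, a11, a22, a10, a20, a21]
  ring

/-- The optimal commutator inequality for real skew-symmetric `3 × 3` matrices. -/
theorem ddvv_skew_three (m : ℕ) (hm : 0 < m)
    (B : Fin m → Matrix (Fin 3) (Fin 3) ℝ)
    (hskew : ∀ r, (B r)ᵀ = -B r) :
    ∑ r, ∑ s, frobSq (matComm (B r) (B s)) ≤ (1 / 3) * (∑ r, frobSq (B r)) ^ 2 := by
  set x : Fin m → ℝ := fun r => B r 0 1 with hx
  set y : Fin m → ℝ := fun r => B r 0 2 with hy
  set z : Fin m → ℝ := fun r => B r 1 2 with hz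
  set Sxx := ∑ r, x r ^ 2 with hSxx
  set Syy := ∑ r, y r ^ 2 with hSyy
  set Szz := ∑ r, z r ^ 2 with hSzz
  set Sxy := ∑ r, x r * y r with hSxy
  set Sxz := ∑ r, x r * z r with hSxz
  set Syz := ∑ r, y r * z r with hSyz
  have hprod : ∀ f g : Fin m → ℝ,
      ∑ r, ∑ s, f r * g s = (∑ r, f r) * (∑ r, g r) := by
    intro f g
    rw [Finset.sum_mul_sum]
  have hRHS : ∑ r, frobSq (B r) = 2 * (Sxx + Syy + Szz) := by
    rw [hSxx, hSyy, hSzz, ← Finset.sum_add_distrib, ← Finset.sum_add_distrib,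
      Finset.mul_sum]
    exact Finset.sum_congr rfl fun r _ => by rw [frob_skew (B r) (hskew r)]
  have hLHS : ∑ r, ∑ s, frobSq (matComm (B r) (B s)) =
      2 * ((Sxx + Syy + Szz) * (Sxx + Syy + Szz))
        - 2 * (Sxx * Sxx) - 2 * (Syy * Syy) - 2 * (Szz * Szz)
        - 4 * (Sxy * Sxy) - 4 * (Sxz * Sxz) - 4 * (Syz * Syz) := by
    have step : ∀ r s : Fin m, frobSq (matComm (B r) (B s)) =
        2 * ((x r ^ 2 + y r ^ 2 + z r ^ 2) * (x s ^ 2 + y s ^ 2 + z s ^ 2))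
          - 2 * (x r ^ 2 * x s ^ 2) - 2 * (y r ^ 2 * y s ^ 2) - 2 * (z r ^ 2 * z s ^ 2)
          - 4 * ((x r * y r) * (x s * y s)) - 4 * ((x r * z r) * (x s * z s))
          - 4 * ((y r * z r) * (y s * z s)) :=
      fun r s => frob_comm_skew (B r) (B s) (hskew r) (hskew s)
    have hprod2 : ∀ (c : ℝ) (f g : Fin m → ℝ),
        ∑ r, ∑ s, c * (f r * g s) = c * ((∑ r, f r) * (∑ r, g r)) := by
      intro c f g
      rw [← hprod f g, Finset.mul_sum]
      exact Finset.sum_congr rfl fun r _ => by rw [Finset.mul_sum]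
    simp_rw [step]
    simp only [Finset.sum_sub_distrib]
    rw [hprod2 2 (fun r => x r ^ 2 + y r ^ 2 + z r ^ 2) (fun s => x s ^ 2 + y s ^ 2 + z s ^ 2),
      hprod2 2 (fun r => x r ^ 2) (fun s => x s ^ 2),
      hprod2 2 (fun r => y r ^ 2) (fun s => y s ^ 2),
      hprod2 2 (fun r => z r ^ 2) (fun s => z s ^ 2),
      hprod2 4 (fun r => x r * y r) (fun s => x s * y s),
      hprod2 4 (fun r => x r * z r) (fun s => x s * z s),
      hprod2 4 (fun r => y r * z r) (fun s => y s * z s)]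
    rw [Finset.sum_add_distrib, Finset.sum_add_distrib]
  rw [hLHS, hRHS]
  nlinarith [sq_nonneg (Sxx - Syy), sq_nonneg (Sxx - Szz), sq_nonneg (Syy - Szz),
    sq_nonneg Sxy, sq_nonneg Sxz, sq_nonneg Syz]
end

section
/- Let m ≥ 3 and let B_1, ..., B_m be real skew-symmetric 3×3 matrices. Then equality Σ_{r,s=1}^m ‖[B_r,B_s]‖² = (1/3)·(Σ_{r=1}^m ‖B_r‖²)² holds if and only if there exist P ∈ O(3), R ∈ O(m) and a real number λ ≥ 0 such that, setting C_s = Σ_{r=1}^m R_{rs} Pᵀ B_r P for each s, one has C_1 = K_1(λ), C_2 = K_2(λ), C_3 = K_3(λ), and C_s = 0 for all s ≥ 4, where K_1(λ) is the 3×3 skew-symmetric matrix with (1,2)-entry λ and (2,1)-entry −λ (all other entries 0), K_2(λ) has (1,3)-entry λ and (3,1)-entry −λ (all other entries 0), and K_3(λ) has (2,3)-entry λ and (3,2)-entry −λ (all other entries 0). -/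
open Matrix BigOperators

/-- `K₁(λ)`: skew matrix with `(1,2)`-entry `λ`. -/
def K1 (l : ℝ) : Matrix (Fin 3) (Fin 3) ℝ := !![0, l, 0; -l, 0, 0; 0, 0, 0]

/-- `K₂(λ)`: skew matrix with `(1,3)`-entry `λ`. -/
def K2 (l : ℝ) : Matrix (Fin 3) (Fin 3) ℝ := !![0, 0, l; 0, 0, 0; -l, 0, 0]

/-- `K₃(λ)`: skew matrix with `(2,3)`-entry `λ`. -/
def K3 (l : ℝ) : Matrix (Fin 3) (Fin 3) ℝ := !![0, 0, 0; 0, 0, l; 0, -l, 0]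

namespace DDVV

def hat (v : Fin 3 → ℝ) : Matrix (Fin 3) (Fin 3) ℝ :=
  !![0, -v 2, v 1; v 2, 0, -v 0; -v 1, v 0, 0]

lemma hat_of_skew {B : Matrix (Fin 3) (Fin 3) ℝ} (h : Bᵀ = -B) :
    B = hat ![B 2 1, B 0 2, B 1 0] := by
  have h' : ∀ i j, B j i = - B i j := fun i j => by
    have := congrFun (congrFun h i) j; simpa [Matrix.transpose_apply] using this
  ext i j
  fin_cases i <;> fin_cases j <;>
    simp [hat] <;> linarith [h' 0 0, h' 1 1, h' 2 2, h' 0 1, h' 0 2, h' 1 2]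

lemma frobSq_hat (v : Fin 3 → ℝ) :
    frobSq (hat v) = 2 * ((v 0)^2 + (v 1)^2 + (v 2)^2) := by
  simp [frobSq, hat, Fin.sum_univ_three]; ring

lemma comm_hat (a b : Fin 3 → ℝ) :
    matComm (hat a) (hat b) =
      hat ![a 1 * b 2 - a 2 * b 1, a 2 * b 0 - a 0 * b 2, a 0 * b 1 - a 1 * b 0] := by
  ext i j
  fin_cases i <;> fin_cases j <;>
    simp [matComm, hat, Matrix.mul_apply, Fin.sum_univ_three] <;> ring

lemma frobSq_comm_hat (a b : Fin 3 → ℝ) :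
    frobSq (matComm (hat a) (hat b)) =
      2 * (((a 0)^2+(a 1)^2+(a 2)^2) * ((b 0)^2+(b 1)^2+(b 2)^2)
        - (a 0 * b 0 + a 1 * b 1 + a 2 * b 2)^2) := by
  rw [comm_hat, frobSq_hat]
  simp only [Matrix.cons_val_zero, Matrix.cons_val_one, Matrix.head_cons,
    Matrix.cons_val_two, Matrix.tail_cons]
  ring

lemma hat_sum {m : ℕ} (w : Fin m → ℝ) (v : Fin m → Fin 3 → ℝ) :
    ∑ r, w r • hat (v r) = hat (fun i => ∑ r, w r * v r i) := by
  ext i j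
  rw [Matrix.sum_apply]
  fin_cases i <;> fin_cases j <;>
    simp [hat, Finset.mul_sum, mul_neg, Finset.sum_neg_distrib]

lemma master {m : ℕ} (x y z : Fin m → ℝ) :
    ∑ r, ∑ s, (2 * ((x r^2 + y r^2 + z r^2) * (x s^2 + y s^2 + z s^2)
        - (x r * x s + y r * y s + z r * z s)^2))
      = 4 * ((∑ r, x r^2) * (∑ r, y r^2) + (∑ r, x r^2) * (∑ r, z r^2)
          + (∑ r, y r^2) * (∑ r, z r^2)
          - (∑ r, x r * y r)^2 - (∑ r, x r * z r)^2 - (∑ r, y r * z r)^2) := by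
  have inner : ∀ r, ∑ s, (2 * ((x r^2 + y r^2 + z r^2) * (x s^2 + y s^2 + z s^2)
        - (x r * x s + y r * y s + z r * z s)^2))
      = (2 * x r^2) * ((∑ s, y s^2) + (∑ s, z s^2))
        + (2 * y r^2) * ((∑ s, x s^2) + (∑ s, z s^2))
        + (2 * z r^2) * ((∑ s, x s^2) + (∑ s, y s^2))
        - (4 * (x r * y r)) * (∑ s, x s * y s)
        - (4 * (x r * z r)) * (∑ s, x s * z s)
        - (4 * (y r * z r)) * (∑ s, y s * z s) := by
    intro r
    have e : ∀ s, (2 * ((x r^2 + y r^2 + z r^2) * (x s^2 + y s^2 + z s^2)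
        - (x r * x s + y r * y s + z r * z s)^2))
      = (2 * x r^2) * (y s^2 + z s^2)
        + (2 * y r^2) * (x s^2 + z s^2)
        + (2 * z r^2) * (x s^2 + y s^2)
        - (4 * (x r * y r)) * (x s * y s)
        - (4 * (x r * z r)) * (x s * z s)
        - (4 * (y r * z r)) * (y s * z s) := fun s => by ring
    rw [Finset.sum_congr rfl (fun s _ => e s)]
    simp only [Finset.sum_add_distrib, Finset.sum_sub_distrib, ← Finset.mul_sum]
  rw [Finset.sum_congr rfl (fun r _ => inner r)]
  simp only [Finset.sum_add_distrib, Finset.sum_sub_distrib, ← Finset.sum_mul]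
  simp only [← Finset.mul_sum]
  ring

lemma frobSq_eq_trace {n : ℕ} (A : Matrix (Fin n) (Fin n) ℝ) :
    frobSq A = Matrix.trace (Aᵀ * A) := by
  simp [frobSq, Matrix.trace, Matrix.diag, Matrix.mul_apply, sq]
  rw [Finset.sum_comm]

lemma frobSq_conj {n : ℕ} {P : Matrix (Fin n) (Fin n) ℝ}
    (h2 : Pᵀ * P = 1) (A : Matrix (Fin n) (Fin n) ℝ) :
    frobSq (P * A * Pᵀ) = frobSq A := by
  rw [frobSq_eq_trace, frobSq_eq_trace]
  have e : (P * A * Pᵀ)ᵀ * (P * A * Pᵀ) = P * (Aᵀ * A) * Pᵀ := by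
    simp only [Matrix.transpose_mul, Matrix.transpose_transpose]
    calc P * (Aᵀ * Pᵀ) * (P * A * Pᵀ) = P * Aᵀ * (Pᵀ * P) * A * Pᵀ := by noncomm_ring
      _ = P * (Aᵀ * A) * Pᵀ := by rw [h2]; noncomm_ring
  rw [e, Matrix.trace_mul_cycle, ← Matrix.mul_assoc, h2, Matrix.one_mul]

lemma comm_conj {n : ℕ} {P : Matrix (Fin n) (Fin n) ℝ}
    (h2 : Pᵀ * P = 1) (A B : Matrix (Fin n) (Fin n) ℝ) :
    matComm (P * A * Pᵀ) (P * B * Pᵀ) = P * matComm A B * Pᵀ := by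
  unfold matComm
  have e : ∀ X Y : Matrix (Fin n) (Fin n) ℝ,
      (P * X * Pᵀ) * (P * Y * Pᵀ) = P * (X * Y) * Pᵀ := by
    intro X Y
    calc (P * X * Pᵀ) * (P * Y * Pᵀ) = P * X * (Pᵀ * P) * Y * Pᵀ := by noncomm_ring
      _ = P * (X * Y) * Pᵀ := by rw [h2]; noncomm_ring
  rw [Matrix.mul_sub, Matrix.sub_mul, e, e]

lemma rowOrth {m : ℕ} {R : Matrix (Fin m) (Fin m) ℝ}
    (h : R ∈ Matrix.orthogonalGroup (Fin m) ℝ) (r r' : Fin m) :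
    ∑ s, R r s * R r' s = if r = r' then (1:ℝ) else 0 := by
  have h1 : R * star R = 1 := (Matrix.mem_orthogonalGroup_iff _ _).mp h
  have := congrFun (congrFun h1 r) r'
  simpa [Matrix.mul_apply, Matrix.star_apply, Matrix.one_apply] using this

lemma colOrth {m : ℕ} {R : Matrix (Fin m) (Fin m) ℝ}
    (h : R ∈ Matrix.orthogonalGroup (Fin m) ℝ) (s t : Fin m) :
    ∑ r, R r s * R r t = if s = t then (1:ℝ) else 0 := by
  have h1 : star R * R = 1 := (Matrix.mem_orthogonalGroup_iff' _ _).mp h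
  have := congrFun (congrFun h1 s) t
  simpa [Matrix.mul_apply, Matrix.star_apply, Matrix.one_apply] using this

lemma recomb {m n : ℕ} {R : Matrix (Fin m) (Fin m) ℝ}
    (hRow : ∀ r r', ∑ s, R r s * R r' s = if r = r' then (1:ℝ) else 0)
    (A : Fin m → Matrix (Fin n) (Fin n) ℝ) (r : Fin m) :
    ∑ s, R r s • (∑ r', R r' s • A r') = A r := by
  have e1 : ∀ s, R r s • (∑ r', R r' s • A r') = ∑ r', (R r s * R r' s) • A r' := by
    intro s; rw [Finset.smul_sum]
    exact Finset.sum_congr rfl fun r' _ => (smul_smul _ _ _)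
  rw [Finset.sum_congr rfl fun s _ => e1 s, Finset.sum_comm]
  have e2 : ∀ r', ∑ s, (R r s * R r' s) • A r' = (if r = r' then (1:ℝ) else 0) • A r' := by
    intro r'; rw [← Finset.sum_smul, hRow]
  rw [Finset.sum_congr rfl fun r' _ => e2 r']
  simp [ite_smul]

lemma target_eq_hat {m : ℕ} (hm : 3 ≤ m) (l : ℝ) (s : Fin m) :
    (if (s : ℕ) = 0 then K1 l else if (s : ℕ) = 1 then K2 l
        else if (s : ℕ) = 2 then K3 l else 0)
      = hat (fun i => (if s = (⟨0, by omega⟩ : Fin m) then (![0,0,-l] : Fin 3 → ℝ) i else 0)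
          + (if s = (⟨1, by omega⟩ : Fin m) then (![0,l,0] : Fin 3 → ℝ) i else 0)
          + (if s = (⟨2, by omega⟩ : Fin m) then (![-l,0,0] : Fin 3 → ℝ) i else 0)) := by
  have e0 : s = (⟨0, by omega⟩ : Fin m) ↔ (s : ℕ) = 0 := by rw [Fin.ext_iff]
  have e1 : s = (⟨1, by omega⟩ : Fin m) ↔ (s : ℕ) = 1 := by rw [Fin.ext_iff]
  have e2 : s = (⟨2, by omega⟩ : Fin m) ↔ (s : ℕ) = 2 := by rw [Fin.ext_iff]
  by_cases h0 : (s : ℕ) = 0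
  · simp only [h0, if_pos, e0.mpr h0, if_true, e1, e2, h0]
    norm_num
    ext i j; fin_cases i <;> fin_cases j <;> simp [K1, hat]
  · by_cases h1 : (s : ℕ) = 1
    · simp only [h0, h1, if_neg, if_pos, e0, e1.mpr h1, e2, if_false, if_true]
      norm_num
      ext i j; fin_cases i <;> fin_cases j <;> simp [K2, hat]
    · by_cases h2 : (s : ℕ) = 2
      · simp only [h0, h1, h2, e0, e1, e2, if_false, if_true]
        norm_num
        ext i j; fin_cases i <;> fin_cases j <;> simp [K3, hat]
      · simp only [h0, h1, h2, e0, e1, e2, if_false]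
        ext i j; fin_cases i <;> fin_cases j <;> simp [hat, Matrix.vecHead, Matrix.vecTail]

end DDVV

namespace DDVV

lemma ib' {m : ℕ} (b : OrthonormalBasis (Fin m) ℝ (EuclideanSpace ℝ (Fin m))) (j k : Fin m) :
    ∑ r, b j r * b k r = if j = k then (1:ℝ) else 0 := by
  rw [← (by simp [PiLp.inner_apply, RCLike.inner_apply, mul_comm] :
    (inner ℝ (b j) (b k) : ℝ) = ∑ r, b j r * b k r)]
  exact orthonormal_iff_ite.mp b.orthonormal j k

lemma exists_R {m : ℕ} (hm : 3 ≤ m) (u : Fin 3 → EuclideanSpace ℝ (Fin m))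
    (hu : ∀ i j, ∑ r, u i r * u j r = if i = j then (1:ℝ) else 0) :
    ∃ R : Matrix (Fin m) (Fin m) ℝ, R ∈ Matrix.orthogonalGroup (Fin m) ℝ ∧
      ∀ (s : Fin m) (i : Fin 3), ∑ r, R r s * u i r =
        (if (s:ℕ) = 0 then (if (i:ℕ) = 2 then (-1:ℝ) else 0)
         else if (s:ℕ) = 1 then (if (i:ℕ) = 1 then 1 else 0)
         else if (s:ℕ) = 2 then (if (i:ℕ) = 0 then -1 else 0)
         else 0) := by
  classical
  set V : Fin m → EuclideanSpace ℝ (Fin m) :=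
    fun j => if h : (j:ℕ) < 3 then u ⟨(j:ℕ), h⟩ else 0 with hVdef
  have hV : Orthonormal ℝ (Set.restrict {j : Fin m | (j:ℕ) < 3} V) := by
    rw [orthonormal_iff_ite]
    intro a b
    have ha : (a : Fin m) ∈ {j : Fin m | (j:ℕ) < 3} := a.2
    have hb : (b : Fin m) ∈ {j : Fin m | (j:ℕ) < 3} := b.2
    have e1 : V a = u ⟨((a : Fin m):ℕ), ha⟩ := dif_pos ha
    have e2 : V b = u ⟨((b : Fin m):ℕ), hb⟩ := dif_pos hb
    have : (inner ℝ (V (a : Fin m)) (V (b : Fin m)) : ℝ)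
        = ∑ r, u ⟨((a : Fin m):ℕ), ha⟩ r * u ⟨((b : Fin m):ℕ), hb⟩ r := by
      rw [e1, e2]
      simp [PiLp.inner_apply, RCLike.inner_apply, mul_comm]
    change inner ℝ (V a) (V b) = _
    rw [this, hu]
    congr 1
    simp [Fin.ext_iff, Subtype.ext_iff]
  obtain ⟨b, hb⟩ := hV.exists_orthonormalBasis_extension_of_card_eq (by simp)
  set emb : Fin 3 → Fin m := fun i => ⟨(i:ℕ), lt_of_lt_of_le i.isLt hm⟩ with hembdef
  have hbu : ∀ i : Fin 3, b (emb i) = u i := by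
    intro i
    rw [hb (emb i) (show ((emb i):ℕ) < 3 from i.isLt)]
    simp only [hVdef]
    rw [dif_pos (show ((emb i):ℕ) < 3 from i.isLt)]
  have embinj : ∀ i i' : Fin 3, emb i = emb i' ↔ i = i' := by
    intro i i'; simp [hembdef, Fin.ext_iff]
  set σ : Fin m → Fin m := fun s =>
    if (s:ℕ) = 0 then emb 2 else if (s:ℕ) = 1 then emb 1
      else if (s:ℕ) = 2 then emb 0 else s with hσdef
  set ε : Fin m → ℝ := fun s =>
    if (s:ℕ) = 1 then 1 else if (s:ℕ) ≤ 2 then -1 else 1 with hεdef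
  have hεsq : ∀ s, ε s * ε s = 1 := by
    intro s; simp only [hεdef]; split_ifs <;> norm_num
  have hσval : ∀ s : Fin m, (σ s : ℕ) =
      if (s:ℕ) = 0 then 2 else if (s:ℕ) = 1 then 1 else if (s:ℕ) = 2 then 0 else (s:ℕ) := by
    intro s; simp only [hσdef]; split_ifs <;> rfl
  have hσσ : ∀ s, σ (σ s) = s := by
    intro s
    apply Fin.ext
    rw [hσval, hσval]
    by_cases h0 : (s:ℕ) = 0 <;> by_cases h1 : (s:ℕ) = 1 <;> by_cases h2 : (s:ℕ) = 2 <;>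
      simp [h0, h1, h2] <;> omega
  have hσinj : ∀ s t, σ s = σ t → s = t := fun s t h => by
    rw [← hσσ s, h, hσσ]
  set R : Matrix (Fin m) (Fin m) ℝ := fun r s => ε s * b (σ s) r with hRdef
  have hcol : ∀ s t, ∑ r, R r s * R r t = if s = t then (1:ℝ) else 0 := by
    intro s t
    have : ∀ r, R r s * R r t = (ε s * ε t) * (b (σ s) r * b (σ t) r) := by
      intro r; simp only [hRdef]; ring
    rw [Finset.sum_congr rfl fun r _ => this r, ← Finset.mul_sum, ib']
    by_cases h : s = t
    · subst h; rw [if_pos rfl, if_pos rfl, mul_one, hεsq]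
    · rw [if_neg (fun hc => h (hσinj _ _ hc)), if_neg h, mul_zero]
  refine ⟨R, ?_, ?_⟩
  · rw [Matrix.mem_orthogonalGroup_iff']
    ext s t
    rw [Matrix.mul_apply]
    have : ∀ r, Rᵀ s r * R r t = R r s * R r t := by
      intro r; simp [Matrix.transpose_apply]
    rw [Finset.sum_congr rfl fun r _ => this r, hcol, Matrix.one_apply]
  · intro s i
    have : ∀ r, R r s * u i r = ε s * (b (σ s) r * b (emb i) r) := by
      intro r; rw [← hbu i]; simp only [hRdef]; ring
    rw [Finset.sum_congr rfl fun r _ => this r, ← Finset.mul_sum, ib']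
    have hembi : ((emb i : Fin m) : ℕ) = (i : ℕ) := rfl
    by_cases h0 : (s:ℕ) = 0
    · have hε : ε s = -1 := by simp [hεdef, h0]
      have hσ : σ s = emb 2 := by simp [hσdef, h0]
      rw [hσ, hε, if_pos h0]
      by_cases hi : (i:ℕ) = 2
      · rw [if_pos ((embinj 2 i).mpr (Fin.ext hi.symm) : emb 2 = emb i), if_pos hi]; norm_num
      · rw [if_neg (fun hc => hi (((Fin.ext_iff).mp ((embinj 2 i).mp hc)).symm)), if_neg hi]
        norm_num
    · by_cases h1 : (s:ℕ) = 1
      · have hε : ε s = 1 := by simp [hεdef, h1]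
        have hσ : σ s = emb 1 := by simp [hσdef, h0, h1]
        rw [hσ, hε, if_neg h0, if_pos h1]
        by_cases hi : (i:ℕ) = 1
        · rw [if_pos ((embinj 1 i).mpr (Fin.ext hi.symm)), if_pos hi]; norm_num
        · rw [if_neg (fun hc => hi (((Fin.ext_iff).mp ((embinj 1 i).mp hc)).symm)), if_neg hi]
          norm_num
      · by_cases h2 : (s:ℕ) = 2
        · have hε : ε s = -1 := by simp [hεdef, h1, h2]
          have hσ : σ s = emb 0 := by simp [hσdef, h0, h1, h2]
          rw [hσ, hε, if_neg h0, if_neg h1, if_pos h2]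
          by_cases hi : (i:ℕ) = 0
          · rw [if_pos ((embinj 0 i).mpr (Fin.ext hi.symm)), if_pos hi]; norm_num
          · rw [if_neg (fun hc => hi (((Fin.ext_iff).mp ((embinj 0 i).mp hc)).symm)), if_neg hi]
            norm_num
        · have hσ : σ s = s := by simp [hσdef, h0, h1, h2]
          rw [hσ, if_neg h0, if_neg h1, if_neg h2]
          rw [if_neg (fun hc : s = emb i => by
            have : (s:ℕ) = (i:ℕ) := by rw [hc]
            have : (i:ℕ) < 3 := i.isLt
            omega), mul_zero]

end DDVV
namespace DDVV

lemma hatK1 (l : ℝ) : hat ![0, 0, -l] = K1 l := by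
  ext i j; fin_cases i <;> fin_cases j <;> simp [hat, K1, Matrix.vecHead, Matrix.vecTail]

lemma hatK2 (l : ℝ) : hat ![0, l, 0] = K2 l := by
  ext i j; fin_cases i <;> fin_cases j <;> simp [hat, K2, Matrix.vecHead, Matrix.vecTail]

lemma hatK3 (l : ℝ) : hat ![-l, 0, 0] = K3 l := by
  ext i j; fin_cases i <;> fin_cases j <;> simp [hat, K3, Matrix.vecHead, Matrix.vecTail]

lemma hatzero : hat ![0, 0, 0] = 0 := by
  ext i j; fin_cases i <;> fin_cases j <;> simp [hat, Matrix.vecHead, Matrix.vecTail]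

lemma K1zero : K1 0 = 0 := by ext i j; fin_cases i <;> fin_cases j <;> simp [K1, Matrix.vecHead, Matrix.vecTail]
lemma K2zero : K2 0 = 0 := by ext i j; fin_cases i <;> fin_cases j <;> simp [K2, Matrix.vecHead, Matrix.vecTail]
lemma K3zero : K3 0 = 0 := by ext i j; fin_cases i <;> fin_cases j <;> simp [K3, Matrix.vecHead, Matrix.vecTail]

lemma forward {m : ℕ} (hm : 3 ≤ m) (B : Fin m → Matrix (Fin 3) (Fin 3) ℝ)
    (hskew : ∀ r, (B r)ᵀ = -B r)
    (h : ∑ r, ∑ s, frobSq (matComm (B r) (B s)) = (1 / 3) * (∑ r, frobSq (B r)) ^ 2) :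
    ∃ P ∈ Matrix.orthogonalGroup (Fin 3) ℝ, ∃ R ∈ Matrix.orthogonalGroup (Fin m) ℝ,
      ∃ l : ℝ, 0 ≤ l ∧
        (fun s : Fin m => ∑ r, R r s • (Pᵀ * B r * P)) =
          fun s : Fin m =>
            if (s : ℕ) = 0 then K1 l
            else if (s : ℕ) = 1 then K2 l
            else if (s : ℕ) = 2 then K3 l
            else 0 := by
  classical
  have mem1 : ∀ k : ℕ, (1 : Matrix (Fin k) (Fin k) ℝ) ∈ Matrix.orthogonalGroup (Fin k) ℝ :=
    fun k => (Matrix.mem_orthogonalGroup_iff _ _).mpr (by simp)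
  set v : Fin m → Fin 3 → ℝ := fun r => ![B r 2 1, B r 0 2, B r 1 0] with hvdef
  have hBv : ∀ r, B r = hat (v r) := fun r => hat_of_skew (hskew r)
  set Sa : ℝ := ∑ r, (v r 0)^2 with hSa
  set Sb : ℝ := ∑ r, (v r 1)^2 with hSb
  set Sc : ℝ := ∑ r, (v r 2)^2 with hSc
  set Sp : ℝ := ∑ r, v r 0 * v r 1 with hSp
  set Sq : ℝ := ∑ r, v r 0 * v r 2 with hSq
  set Sw : ℝ := ∑ r, v r 1 * v r 2 with hSw
  have h1 : ∑ r, ∑ s, frobSq (matComm (B r) (B s))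
      = 4 * (Sa * Sb + Sa * Sc + Sb * Sc - Sp^2 - Sq^2 - Sw^2) := by
    rw [Finset.sum_congr rfl fun r _ => Finset.sum_congr rfl fun s _ => by
      rw [hBv r, hBv s, frobSq_comm_hat]]
    have M := master (fun r => v r 0) (fun r => v r 1) (fun r => v r 2)
    rw [M]
  have h2 : ∑ r, frobSq (B r) = 2 * (Sa + Sb + Sc) := by
    rw [Finset.sum_congr rfl fun r _ => by rw [hBv r, frobSq_hat], ← Finset.mul_sum,
      Finset.sum_add_distrib, Finset.sum_add_distrib]
  rw [h1, h2] at h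
  have key : (Sa - Sb)^2 + (Sb - Sc)^2 + (Sa - Sc)^2 + 6*Sp^2 + 6*Sq^2 + 6*Sw^2 = 0 := by
    linear_combination (-3/2) * h
  have hab : Sa = Sb := by
    have : (Sa - Sb)^2 = 0 := by
      linarith [sq_nonneg (Sa - Sb), sq_nonneg (Sb - Sc), sq_nonneg (Sa - Sc), sq_nonneg Sp, sq_nonneg Sq, sq_nonneg Sw, key]
    have := sq_eq_zero_iff.mp this
    linarith [sub_eq_zero.mp this]
  have hbc : Sb = Sc := by
    have : (Sb - Sc)^2 = 0 := by
      linarith [sq_nonneg (Sa - Sb), sq_nonneg (Sb - Sc), sq_nonneg (Sa - Sc), sq_nonneg Sp, sq_nonneg Sq, sq_nonneg Sw, key]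
    have := sq_eq_zero_iff.mp this
    linarith [sub_eq_zero.mp this]
  have hp : Sp = 0 := by
    have : Sp^2 = 0 := by
      linarith [sq_nonneg (Sa - Sb), sq_nonneg (Sb - Sc), sq_nonneg (Sa - Sc), sq_nonneg Sp, sq_nonneg Sq, sq_nonneg Sw, key]
    exact sq_eq_zero_iff.mp this
  have hq : Sq = 0 := by
    have : Sq^2 = 0 := by
      linarith [sq_nonneg (Sa - Sb), sq_nonneg (Sb - Sc), sq_nonneg (Sa - Sc), sq_nonneg Sp, sq_nonneg Sq, sq_nonneg Sw, key]
    exact sq_eq_zero_iff.mp this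
  have hw : Sw = 0 := by
    have : Sw^2 = 0 := by
      linarith [sq_nonneg (Sa - Sb), sq_nonneg (Sb - Sc), sq_nonneg (Sa - Sc), sq_nonneg Sp, sq_nonneg Sq, sq_nonneg Sw, key]
    exact sq_eq_zero_iff.mp this
  have hSa0 : 0 ≤ Sa := Finset.sum_nonneg fun r _ => sq_nonneg _
  by_cases hz : Sa = 0
  · -- all matrices vanish
    have hvz : ∀ (r : Fin m) (i : Fin 3), v r i = 0 := by
      intro r i
      have zb : Sb = 0 := hab ▸ hz
      have zc : Sc = 0 := hbc ▸ zb
      have z0 : (v r 0)^2 = 0 :=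
        (Finset.sum_eq_zero_iff_of_nonneg (fun r _ => sq_nonneg _)).mp hz r (Finset.mem_univ r)
      have z1 : (v r 1)^2 = 0 :=
        (Finset.sum_eq_zero_iff_of_nonneg (fun r _ => sq_nonneg _)).mp zb r (Finset.mem_univ r)
      have z2 : (v r 2)^2 = 0 :=
        (Finset.sum_eq_zero_iff_of_nonneg (fun r _ => sq_nonneg _)).mp zc r (Finset.mem_univ r)
      fin_cases i
      · exact sq_eq_zero_iff.mp z0
      · exact sq_eq_zero_iff.mp z1
      · exact sq_eq_zero_iff.mp z2
    have hBzero : ∀ r, B r = 0 := by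
      intro r
      rw [hBv r]
      have : v r = ![0,0,0] := by
        funext i; rw [hvz r i]; fin_cases i <;> simp
      rw [this, hatzero]
    refine ⟨1, mem1 3, 1, mem1 m, 0, le_refl 0, ?_⟩
    funext s
    simp only [hBzero, Matrix.mul_zero, Matrix.zero_mul, smul_zero, Finset.sum_const_zero]
    split_ifs
    · exact K1zero.symm
    · exact K2zero.symm
    · exact K3zero.symm
    · rfl
  · have hSapos : 0 < Sa := lt_of_le_of_ne hSa0 (Ne.symm hz)
    set l : ℝ := Real.sqrt Sa with hldef
    have hl : 0 < l := Real.sqrt_pos.mpr hSapos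
    have hll : l^2 = Sa := Real.sq_sqrt hSa0
    have hlne : l ≠ 0 := ne_of_gt hl
    have g00 : ∑ r, v r 0 * v r 0 = Sa := by
      rw [hSa]; exact Finset.sum_congr rfl fun r _ => by ring
    have g11 : ∑ r, v r 1 * v r 1 = Sa := by
      rw [hab, hSb]; exact Finset.sum_congr rfl fun r _ => by ring
    have g22 : ∑ r, v r 2 * v r 2 = Sa := by
      rw [hab, hbc, hSc]; exact Finset.sum_congr rfl fun r _ => by ring
    have g10 : ∑ r, v r 1 * v r 0 = 0 := by
      rw [Finset.sum_congr rfl fun r (_ : r ∈ Finset.univ) => mul_comm (v r 1) (v r 0)]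
      exact hp
    have g20 : ∑ r, v r 2 * v r 0 = 0 := by
      rw [Finset.sum_congr rfl fun r (_ : r ∈ Finset.univ) => mul_comm (v r 2) (v r 0)]
      exact hq
    have g21 : ∑ r, v r 2 * v r 1 = 0 := by
      rw [Finset.sum_congr rfl fun r (_ : r ∈ Finset.univ) => mul_comm (v r 2) (v r 1)]
      exact hw
    have G : ∀ i j : Fin 3, ∑ r, v r i * v r j = if i = j then Sa else 0 := by
      intro i j
      fin_cases i <;> fin_cases j
      · show ∑ r, v r 0 * v r 0 = if (0 : Fin 3) = 0 then Sa else 0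
        rw [if_pos rfl]; exact g00
      · show ∑ r, v r 0 * v r 1 = if (0 : Fin 3) = 1 then Sa else 0
        rw [if_neg (by decide)]; exact hp
      · show ∑ r, v r 0 * v r 2 = if (0 : Fin 3) = 2 then Sa else 0
        rw [if_neg (by decide)]; exact hq
      · show ∑ r, v r 1 * v r 0 = if (1 : Fin 3) = 0 then Sa else 0
        rw [if_neg (by decide)]; exact g10
      · show ∑ r, v r 1 * v r 1 = if (1 : Fin 3) = 1 then Sa else 0
        rw [if_pos rfl]; exact g11
      · show ∑ r, v r 1 * v r 2 = if (1 : Fin 3) = 2 then Sa else 0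
        rw [if_neg (by decide)]; exact hw
      · show ∑ r, v r 2 * v r 0 = if (2 : Fin 3) = 0 then Sa else 0
        rw [if_neg (by decide)]; exact g20
      · show ∑ r, v r 2 * v r 1 = if (2 : Fin 3) = 1 then Sa else 0
        rw [if_neg (by decide)]; exact g21
      · show ∑ r, v r 2 * v r 2 = if (2 : Fin 3) = 2 then Sa else 0
        rw [if_pos rfl]; exact g22
    set u : Fin 3 → EuclideanSpace ℝ (Fin m) := fun i => WithLp.toLp 2 (fun r => v r i / l) with hudef
    have hu : ∀ i j, ∑ r, u i r * u j r = if i = j then (1:ℝ) else 0 := by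
      intro i j
      have e : ∀ r : Fin m, u i r * u j r = (v r i * v r j) / l^2 := by
        intro r
        show (v r i / l) * (v r j / l) = (v r i * v r j) / l^2
        rw [div_mul_div_comm, ← pow_two]
      rw [Finset.sum_congr rfl fun r _ => e r, ← Finset.sum_div, G i j, hll]
      by_cases hij : i = j
      · rw [if_pos hij, if_pos hij, div_self (ne_of_gt hSapos)]
      · rw [if_neg hij, if_neg hij, zero_div]
    obtain ⟨R, hRmem, hRu⟩ := exists_R hm u hu
    refine ⟨1, mem1 3, R, hRmem, l, le_of_lt hl, ?_⟩
    funext s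
    have lhs1 : ∑ r, R r s • ((1:Matrix (Fin 3) (Fin 3) ℝ)ᵀ * B r * 1)
        = hat (fun i => ∑ r, R r s * v r i) := by
      rw [Finset.sum_congr rfl fun r _ => by
        rw [Matrix.transpose_one, Matrix.one_mul, Matrix.mul_one, hBv r]]
      exact hat_sum _ _
    have hvi : ∀ (i : Fin 3) (r : Fin m), l * u i r = v r i := by
      intro i r
      show l * (v r i / l) = v r i
      rw [mul_div_assoc', mul_div_cancel_left₀ _ hlne]
    have hw' : ∀ i : Fin 3, ∑ r, R r s * v r i =
        l * (if (s:ℕ) = 0 then (if (i:ℕ) = 2 then (-1:ℝ) else 0)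
         else if (s:ℕ) = 1 then (if (i:ℕ) = 1 then 1 else 0)
         else if (s:ℕ) = 2 then (if (i:ℕ) = 0 then -1 else 0)
         else 0) := by
      intro i
      have e : ∀ r : Fin m, R r s * v r i = l * (R r s * u i r) := by
        intro r; rw [← hvi i r]; ring
      rw [Finset.sum_congr rfl fun r _ => e r, ← Finset.mul_sum, hRu s i]
    show ∑ r, R r s • ((1:Matrix (Fin 3) (Fin 3) ℝ)ᵀ * B r * 1) = _
    rw [lhs1]
    by_cases h0 : (s:ℕ) = 0
    · have : (fun i => ∑ r, R r s * v r i) = ![0, 0, -l] := by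
        funext i
        rw [hw' i]
        simp only [h0, if_pos]
        fin_cases i <;> norm_num
      rw [this, hatK1, if_pos h0]
    · by_cases hone : (s:ℕ) = 1
      · have : (fun i => ∑ r, R r s * v r i) = ![0, l, 0] := by
          funext i
          rw [hw' i]
          simp only [h0, hone, if_neg, if_pos, if_false, if_true]
          fin_cases i <;> norm_num
        rw [this, hatK2, if_neg h0, if_pos hone]
      · by_cases htwo : (s:ℕ) = 2
        · have : (fun i => ∑ r, R r s * v r i) = ![-l, 0, 0] := by
            funext i
            rw [hw' i]
            simp only [h0, hone, htwo, if_neg, if_pos, if_false, if_true]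
            fin_cases i <;> norm_num
          rw [this, hatK3, if_neg h0, if_neg hone, if_pos htwo]
        · have : (fun i => ∑ r, R r s * v r i) = ![0, 0, 0] := by
            funext i
            rw [hw' i]
            simp only [h0, hone, htwo, if_false]
            fin_cases i <;> norm_num
          rw [this, hatzero, if_neg h0, if_neg hone, if_neg htwo]

end DDVV

namespace DDVV

lemma backward {m : ℕ} (hm : 3 ≤ m) (B : Fin m → Matrix (Fin 3) (Fin 3) ℝ)
    {P : Matrix (Fin 3) (Fin 3) ℝ} (hP : P ∈ Matrix.orthogonalGroup (Fin 3) ℝ)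
    {R : Matrix (Fin m) (Fin m) ℝ} (hR : R ∈ Matrix.orthogonalGroup (Fin m) ℝ)
    (l : ℝ)
    (hC : (fun s : Fin m => ∑ r, R r s • (Pᵀ * B r * P)) =
      fun s : Fin m => if (s : ℕ) = 0 then K1 l else if (s : ℕ) = 1 then K2 l
        else if (s : ℕ) = 2 then K3 l else 0) :
    ∑ r, ∑ s, frobSq (matComm (B r) (B s)) = (1 / 3) * (∑ r, frobSq (B r)) ^ 2 := by
  have hp : P * star P = 1 := (Matrix.mem_orthogonalGroup_iff _ _).mp hP
  have p2 : Pᵀ * P = 1 := by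
    have := (Matrix.mem_orthogonalGroup_iff' _ _).mp hP
    simpa [Matrix.star_eq_conjTranspose,
      Matrix.conjTranspose_eq_transpose_of_trivial] using this
  have p1 : P * Pᵀ = 1 := by
    simpa [Matrix.star_eq_conjTranspose,
      Matrix.conjTranspose_eq_transpose_of_trivial] using hp
  set i0 : Fin m := ⟨0, by omega⟩ with hi0
  set i1 : Fin m := ⟨1, by omega⟩ with hi1
  set i2 : Fin m := ⟨2, by omega⟩ with hi2
  set A : Fin m → Matrix (Fin 3) (Fin 3) ℝ := fun r => Pᵀ * B r * P with hAdef
  set mv : Fin m → Fin 3 → ℝ := fun r i =>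
    R r i0 * (![0,0,-l] : Fin 3 → ℝ) i + R r i1 * (![0,l,0] : Fin 3 → ℝ) i
      + R r i2 * (![-l,0,0] : Fin 3 → ℝ) i with hmv
  have hC' : ∀ s : Fin m, ∑ r, R r s • A r
      = hat (fun i => (if s = i0 then (![0,0,-l] : Fin 3 → ℝ) i else 0)
          + (if s = i1 then (![0,l,0] : Fin 3 → ℝ) i else 0)
          + (if s = i2 then (![-l,0,0] : Fin 3 → ℝ) i else 0)) := by
    intro s
    have := congrFun hC s
    rw [this, target_eq_hat hm]
  have hA : ∀ r, A r = hat (mv r) := by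
    intro r
    have step := recomb (rowOrth hR) A r
    rw [← step, Finset.sum_congr rfl fun s _ => by rw [hC' s], hat_sum]
    congr 1
    funext i
    simp only [mul_add, Finset.sum_add_distrib, mul_ite, mul_zero,
      Finset.sum_ite_eq', Finset.mem_univ, if_true, hmv]
  have hB : ∀ r, B r = P * hat (mv r) * Pᵀ := by
    intro r
    rw [← hA]
    show B r = P * (Pᵀ * B r * P) * Pᵀ
    calc B r = (P * Pᵀ) * B r * (P * Pᵀ) := by rw [p1]; noncomm_ring
      _ = P * (Pᵀ * B r * P) * Pᵀ := by noncomm_ring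
  -- the six Gram sums
  have ne01 : i0 ≠ i1 := by simp [hi0, hi1, Fin.ext_iff]
  have ne02 : i0 ≠ i2 := by simp [hi0, hi2, Fin.ext_iff]
  have ne12 : i1 ≠ i2 := by simp [hi1, hi2, Fin.ext_iff]
  have colsq : ∀ j : Fin m, ∑ r, R r j * R r j = 1 := by
    intro j; rw [colOrth hR j j, if_pos rfl]
  have col0 : ∀ j k : Fin m, j ≠ k → ∑ r, R r j * R r k = 0 := by
    intro j k h; rw [colOrth hR j k, if_neg h]
  have sa : ∑ r, (mv r 0)^2 = l^2 := by
    rw [Finset.sum_congr rfl fun r _ => show (mv r 0)^2 = l^2 * (R r i2 * R r i2) by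
      simp [hmv]; ring]
    rw [← Finset.mul_sum, colsq, mul_one]
  have sb : ∑ r, (mv r 1)^2 = l^2 := by
    rw [Finset.sum_congr rfl fun r _ => show (mv r 1)^2 = l^2 * (R r i1 * R r i1) by
      simp [hmv]; ring]
    rw [← Finset.mul_sum, colsq, mul_one]
  have sc : ∑ r, (mv r 2)^2 = l^2 := by
    rw [Finset.sum_congr rfl fun r _ => show (mv r 2)^2 = l^2 * (R r i0 * R r i0) by
      simp [hmv]; ring]
    rw [← Finset.mul_sum, colsq, mul_one]
  have sp : ∑ r, mv r 0 * mv r 1 = 0 := by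
    rw [Finset.sum_congr rfl fun r _ => show mv r 0 * mv r 1 = -l^2 * (R r i1 * R r i2) by
      simp [hmv]; ring]
    rw [← Finset.mul_sum, col0 _ _ ne12, mul_zero]
  have sq' : ∑ r, mv r 0 * mv r 2 = 0 := by
    rw [Finset.sum_congr rfl fun r _ => show mv r 0 * mv r 2 = l^2 * (R r i0 * R r i2) by
      simp [hmv]; ring]
    rw [← Finset.mul_sum, col0 _ _ ne02, mul_zero]
  have sw : ∑ r, mv r 1 * mv r 2 = 0 := by
    rw [Finset.sum_congr rfl fun r _ => show mv r 1 * mv r 2 = -l^2 * (R r i0 * R r i1) by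
      simp [hmv]; ring]
    rw [← Finset.mul_sum, col0 _ _ ne01, mul_zero]
  have hcomm : ∀ r s, frobSq (matComm (B r) (B s))
      = 2 * (((mv r 0)^2 + (mv r 1)^2 + (mv r 2)^2) * ((mv s 0)^2 + (mv s 1)^2 + (mv s 2)^2)
          - (mv r 0 * mv s 0 + mv r 1 * mv s 1 + mv r 2 * mv s 2)^2) := by
    intro r s
    rw [hB r, hB s, comm_conj p2, frobSq_conj p2, frobSq_comm_hat]
  have hfs : ∀ r, frobSq (B r) = 2 * ((mv r 0)^2 + (mv r 1)^2 + (mv r 2)^2) := by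
    intro r; rw [hB r, frobSq_conj p2, frobSq_hat]
  have e1 : ∑ r, ∑ s, frobSq (matComm (B r) (B s)) = 12 * l^4 := by
    rw [Finset.sum_congr rfl fun r _ =>
      Finset.sum_congr rfl fun s _ => hcomm r s]
    have M := master (fun r => mv r 0) (fun r => mv r 1) (fun r => mv r 2)
    rw [M, sa, sb, sc, sp, sq', sw]
    ring
  have e2 : ∑ r, frobSq (B r) = 6 * l^2 := by
    rw [Finset.sum_congr rfl fun r _ => hfs r, ← Finset.mul_sum,
      Finset.sum_add_distrib, Finset.sum_add_distrib, sa, sb, sc]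
    ring
  rw [e1, e2]; ring

end DDVV

/-- Equality characterization in the commutator inequality for skew-symmetric
`3 × 3` matrices. -/
theorem ddvv_skew_three_equality (m : ℕ) (hm : 3 ≤ m)
    (B : Fin m → Matrix (Fin 3) (Fin 3) ℝ)
    (hskew : ∀ r, (B r)ᵀ = -B r) :
    (∑ r, ∑ s, frobSq (matComm (B r) (B s)) = (1 / 3) * (∑ r, frobSq (B r)) ^ 2) ↔
      ∃ P ∈ Matrix.orthogonalGroup (Fin 3) ℝ, ∃ R ∈ Matrix.orthogonalGroup (Fin m) ℝ,
        ∃ l : ℝ, 0 ≤ l ∧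
          (fun s : Fin m => ∑ r, R r s • (Pᵀ * B r * P)) =
            fun s : Fin m =>
              if (s : ℕ) = 0 then K1 l
              else if (s : ℕ) = 1 then K2 l
              else if (s : ℕ) = 2 then K3 l
              else 0 := by
  constructor
  · intro h
    exact DDVV.forward hm B hskew h
  · rintro ⟨P, hP, R, hR, l, _, hC⟩
    exact DDVV.backward hm B hP hR l hC
end

section
/- For any two real symmetric n×n matrices B_1, B_2, one has 2·‖[B_1,B_2]‖² ≤ (‖B_1‖² + ‖B_2‖²)². -/
open Matrix BigOperators

lemma frobSq_eq_trace {n : ℕ} (A : Matrix (Fin n) (Fin n) ℝ) :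
    frobSq A = (Aᵀ * A).trace := by
  simp [frobSq, Matrix.trace, Matrix.mul_apply, Matrix.diag, sq]
  rw [Finset.sum_comm]

lemma frobSq_conj {n : ℕ} (U M : Matrix (Fin n) (Fin n) ℝ)
    (hU : Uᵀ * U = 1) (hU' : U * Uᵀ = 1) :
    frobSq (Uᵀ * M * U) = frobSq M := by
  rw [frobSq_eq_trace, frobSq_eq_trace]
  have : (Uᵀ * M * U)ᵀ = Uᵀ * Mᵀ * U := by
    simp [Matrix.transpose_mul, mul_assoc]
  rw [this]
  have : Uᵀ * Mᵀ * U * (Uᵀ * M * U) = Uᵀ * (Mᵀ * M) * U := by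
    have h : Uᵀ * Mᵀ * U * (Uᵀ * M * U) = Uᵀ * Mᵀ * (U * Uᵀ) * (M * U) := by
      noncomm_ring
    rw [h, hU', mul_one, mul_assoc, ← mul_assoc Mᵀ, ← mul_assoc]
  rw [this, Matrix.trace_mul_comm, ← mul_assoc, hU', one_mul]

lemma key {n : ℕ} (d : Fin n → ℝ) (M : Matrix (Fin n) (Fin n) ℝ) :
    frobSq (matComm (Matrix.diagonal d) M) ≤ 2 * (∑ k, d k ^ 2) * frobSq M := by
  have hcomm : ∀ i j, (matComm (Matrix.diagonal d) M) i j = (d i - d j) * M i j := by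
    intro i j
    simp [matComm, Matrix.diagonal_mul, Matrix.mul_diagonal, sub_mul]
    ring
  rw [frobSq]
  have : 2 * (∑ k, d k ^ 2) * frobSq M = ∑ i, ∑ j, 2 * (∑ k, d k ^ 2) * M i j ^ 2 := by
    rw [frobSq, Finset.mul_sum]
    congr 1; funext i
    rw [Finset.mul_sum]
  rw [this]
  apply Finset.sum_le_sum; intro i _
  apply Finset.sum_le_sum; intro j _
  rw [hcomm, mul_pow]
  rcases eq_or_ne i j with h | h
  · subst h
    have : (∑ k, d k ^ 2) ≥ 0 := Finset.sum_nonneg fun k _ => sq_nonneg _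
    nlinarith [sq_nonneg (M i i)]
  · have hle : d i ^ 2 + d j ^ 2 ≤ ∑ k, d k ^ 2 := by
      have := Finset.sum_le_sum_of_subset_of_nonneg
        (Finset.subset_univ ({i, j} : Finset (Fin n)))
        (fun k _ _ => sq_nonneg (d k))
      rwa [Finset.sum_pair h] at this
    nlinarith [sq_nonneg (d i + d j), sq_nonneg (M i j), sq_nonneg ((d i - d j) * M i j)]

lemma conjMul {n : ℕ} (U A B : Matrix (Fin n) (Fin n) ℝ) (hU' : U * Uᵀ = 1) :
    Uᵀ * (A * B) * U = (Uᵀ * A * U) * (Uᵀ * B * U) := by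
  have h : (Uᵀ * A * U) * (Uᵀ * B * U) = Uᵀ * A * (U * Uᵀ) * (B * U) := by noncomm_ring
  rw [h, hU', mul_one]
  noncomm_ring

/-- The commutator estimate for two real symmetric matrices. -/
theorem ddvv_two_symmetric (n : ℕ) (B₁ B₂ : Matrix (Fin n) (Fin n) ℝ)
    (h₁ : B₁ᵀ = B₁) (h₂ : B₂ᵀ = B₂) :
    2 * frobSq (matComm B₁ B₂) ≤ (frobSq B₁ + frobSq B₂) ^ 2 := by
  have hH : B₁.IsHermitian := by
    rw [Matrix.IsHermitian, Matrix.conjTranspose]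
    ext i j; simpa using congrFun (congrFun h₁ i) j
  set U : Matrix (Fin n) (Fin n) ℝ := (hH.eigenvectorUnitary : Matrix (Fin n) (Fin n) ℝ) with hUdef
  have hstar : star U = Uᵀ := by
    rw [Matrix.star_eq_conjTranspose, Matrix.conjTranspose_eq_transpose_of_trivial]
  have hU : Uᵀ * U = 1 := by
    rw [← hstar]; exact (Matrix.mem_unitaryGroup_iff').mp hH.eigenvectorUnitary.2
  have hU' : U * Uᵀ = 1 := by
    rw [← hstar]; exact (Matrix.mem_unitaryGroup_iff).mp hH.eigenvectorUnitary.2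
  set d : Fin n → ℝ := hH.eigenvalues with hd
  have hdiag : Uᵀ * B₁ * U = Matrix.diagonal d := by
    rw [← hstar]
    have h := hH.conjStarAlgAut_star_eigenvectorUnitary
    rw [Unitary.conjStarAlgAut_star_apply, RCLike.ofReal_real_eq_id, Function.id_comp] at h
    exact h
  -- conjugated commutator
  have hcomm : Uᵀ * (matComm B₁ B₂) * U = matComm (Matrix.diagonal d) (Uᵀ * B₂ * U) := by
    rw [← hdiag]
    simp only [matComm, Matrix.mul_sub, Matrix.sub_mul]
    rw [conjMul U B₁ B₂ hU', conjMul U B₂ B₁ hU']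
  have e1 : frobSq (matComm B₁ B₂) = frobSq (matComm (Matrix.diagonal d) (Uᵀ * B₂ * U)) := by
    rw [← hcomm, frobSq_conj _ _ hU hU']
  have e2 : frobSq B₂ = frobSq (Uᵀ * B₂ * U) := (frobSq_conj U B₂ hU hU').symm
  have e3 : frobSq B₁ = ∑ k, d k ^ 2 := by
    have := frobSq_conj U B₁ hU hU'
    rw [← this, hdiag, frobSq]
    congr 1; funext i
    rw [Finset.sum_eq_single i]
    · simp
    · intro j _ hj; simp [Matrix.diagonal_apply_ne' _ hj]
    · simp
  have hB2 : frobSq (Uᵀ * B₂ * U) ≥ 0 := by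
    rw [frobSq]; exact Finset.sum_nonneg fun i _ => Finset.sum_nonneg fun j _ => sq_nonneg _
  have hB1 : (0:ℝ) ≤ ∑ k, d k ^ 2 := Finset.sum_nonneg fun k _ => sq_nonneg _
  have hk := key d (Uᵀ * B₂ * U)
  rw [e1, e2, e3]
  nlinarith [sq_nonneg ((∑ k, d k ^ 2) - frobSq (Uᵀ * B₂ * U))]
end

section
/- Let n, m be positive integers, N = n(n+1)/2, and let Ê_1, ..., Ê_N be an orthonormal basis (for the Frobenius inner product) of the space of real symmetric n×n matrices. Let B_1, ..., B_m be real symmetric n×n matrices and let B be the N×m real matrix of coordinates, i.e. B_r = Σ_{α=1}^N B_{αr} Ê_α for each r. Suppose Q ∈ SO(N) and x_1, ..., x_N ≥ 0 satisfy B Bᵀ = Q · diag(x_1,...,x_N) · Qᵀ, and define Q̂_α = Σ_{β=1}^N Q_{βα} Ê_β for each α. Then Σ_{r=1}^m ‖B_r‖² = Σ_{α=1}^N x_α and Σ_{r,s=1}^m ‖[B_r,B_s]‖² = Σ_{α,β=1}^N x_α x_β ‖[Q̂_α, Q̂_β]‖². -/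
open Matrix BigOperators

/-- Frobenius inner product of two real square matrices. -/
def frobInner {n : ℕ} (A B : Matrix (Fin n) (Fin n) ℝ) : ℝ := ∑ i, ∑ j, A i j * B i j

lemma frobSq_eq {n : ℕ} (A : Matrix (Fin n) (Fin n) ℝ) : frobSq A = frobInner A A := by
  simp [frobSq, frobInner, sq]

lemma frobInner_sum_left {n : ℕ} {ι : Type*} (s : Finset ι)
    (f : ι → Matrix (Fin n) (Fin n) ℝ) (W : Matrix (Fin n) (Fin n) ℝ) :
    frobInner (∑ i ∈ s, f i) W = ∑ i ∈ s, frobInner (f i) W := by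
  simp only [frobInner, Matrix.sum_apply, Finset.sum_mul]
  trans ∑ p, ∑ i ∈ s, ∑ q, f i p q * W p q
  · exact Finset.sum_congr rfl fun p _ => Finset.sum_comm
  · exact Finset.sum_comm

lemma frobInner_comm {n : ℕ} (A W : Matrix (Fin n) (Fin n) ℝ) :
    frobInner A W = frobInner W A := by
  simp [frobInner, mul_comm]

lemma frobInner_sum_right {n : ℕ} {ι : Type*} (s : Finset ι)
    (f : ι → Matrix (Fin n) (Fin n) ℝ) (W : Matrix (Fin n) (Fin n) ℝ) :
    frobInner W (∑ i ∈ s, f i) = ∑ i ∈ s, frobInner W (f i) := by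
  rw [frobInner_comm, frobInner_sum_left]
  simp [frobInner_comm]

lemma frobInner_smul_left {n : ℕ} (a : ℝ) (A W : Matrix (Fin n) (Fin n) ℝ) :
    frobInner (a • A) W = a * frobInner A W := by
  simp [frobInner, Finset.mul_sum, mul_assoc]

lemma frobInner_smul_right {n : ℕ} (a : ℝ) (A W : Matrix (Fin n) (Fin n) ℝ) :
    frobInner W (a • A) = a * frobInner W A := by
  rw [frobInner_comm, frobInner_smul_left, frobInner_comm]

lemma matComm_sum_left {n : ℕ} {ι : Type*} (s : Finset ι)
    (f : ι → Matrix (Fin n) (Fin n) ℝ) (W : Matrix (Fin n) (Fin n) ℝ) :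
    matComm (∑ i ∈ s, f i) W = ∑ i ∈ s, matComm (f i) W := by
  simp [matComm, Finset.sum_mul, Finset.mul_sum, Finset.sum_sub_distrib]

lemma matComm_sum_right {n : ℕ} {ι : Type*} (s : Finset ι)
    (f : ι → Matrix (Fin n) (Fin n) ℝ) (W : Matrix (Fin n) (Fin n) ℝ) :
    matComm W (∑ i ∈ s, f i) = ∑ i ∈ s, matComm W (f i) := by
  simp [matComm, Finset.sum_mul, Finset.mul_sum, Finset.sum_sub_distrib]

lemma matComm_smul_left {n : ℕ} (a : ℝ) (A W : Matrix (Fin n) (Fin n) ℝ) :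
    matComm (a • A) W = a • matComm A W := by
  simp [matComm, smul_sub, smul_mul_assoc, mul_smul_comm]

lemma matComm_smul_right {n : ℕ} (a : ℝ) (A W : Matrix (Fin n) (Fin n) ℝ) :
    matComm W (a • A) = a • matComm W A := by
  simp [matComm, smul_sub, smul_mul_assoc, mul_smul_comm]

/-- Core lemma: if `v r = ∑ α, C α r • w α` and `C Cᵀ = diagonal x`, then
`∑ r ‖v r‖² = ∑ α x α ‖w α‖²`. -/
lemma core_lemma {n N m : ℕ} (C : Matrix (Fin N) (Fin m) ℝ) (x : Fin N → ℝ)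
    (hC : C * Cᵀ = Matrix.diagonal x)
    (w : Fin N → Matrix (Fin n) (Fin n) ℝ) (v : Fin m → Matrix (Fin n) (Fin n) ℝ)
    (hv : ∀ r, v r = ∑ α, C α r • w α) :
    ∑ r, frobInner (v r) (v r) = ∑ α, x α * frobInner (w α) (w α) := by
  have h1 : ∀ r, frobInner (v r) (v r)
      = ∑ α, ∑ γ, (C α r * C γ r) * frobInner (w α) (w γ) := by
    intro r
    rw [hv, frobInner_sum_left]
    apply Finset.sum_congr rfl
    intro α _
    rw [frobInner_smul_left, frobInner_sum_right, Finset.mul_sum]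
    apply Finset.sum_congr rfl
    intro γ _
    rw [frobInner_smul_right]
    ring
  calc ∑ r, frobInner (v r) (v r)
      = ∑ r, ∑ α, ∑ γ, (C α r * C γ r) * frobInner (w α) (w γ) :=
        Finset.sum_congr rfl fun r _ => h1 r
    _ = ∑ α, ∑ r, ∑ γ, (C α r * C γ r) * frobInner (w α) (w γ) := Finset.sum_comm
    _ = ∑ α, ∑ γ, ∑ r, (C α r * C γ r) * frobInner (w α) (w γ) :=
        Finset.sum_congr rfl fun α _ => Finset.sum_comm
    _ = ∑ α, ∑ γ, (C * Cᵀ) α γ * frobInner (w α) (w γ) := by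
        apply Finset.sum_congr rfl; intro α _
        apply Finset.sum_congr rfl; intro γ _
        rw [Matrix.mul_apply, Finset.sum_mul]
        simp [Matrix.transpose_apply]
    _ = ∑ α, x α * frobInner (w α) (w α) := by
        rw [hC]
        apply Finset.sum_congr rfl; intro α _
        simp [Matrix.diagonal_apply, ite_mul, Finset.sum_ite_eq]

/-- Translation of the two sides of the DDVV matrix inequality via the coordinate
matrix `B` and a diagonalization `B Bᵀ = Q diag(x) Qᵀ` with `Q ∈ SO(N)`. -/
theorem ddvv_translation (n m : ℕ) (hn : 0 < n) (hm : 0 < m)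
    (Ehat : Fin (n * (n + 1) / 2) → Matrix (Fin n) (Fin n) ℝ)
    (hEsymm : ∀ α, (Ehat α)ᵀ = Ehat α)
    (hEorth : ∀ α β, frobInner (Ehat α) (Ehat β) = if α = β then 1 else 0)
    (hEspan : ∀ A : Matrix (Fin n) (Fin n) ℝ, Aᵀ = A →
      ∃ c : Fin (n * (n + 1) / 2) → ℝ, A = ∑ α, c α • Ehat α)
    (B : Fin m → Matrix (Fin n) (Fin n) ℝ) (hBsymm : ∀ r, (B r)ᵀ = B r)
    (Bc : Matrix (Fin (n * (n + 1) / 2)) (Fin m) ℝ)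
    (hBc : ∀ r, B r = ∑ α, Bc α r • Ehat α)
    (Q : Matrix (Fin (n * (n + 1) / 2)) (Fin (n * (n + 1) / 2)) ℝ)
    (hQ : Q ∈ Matrix.specialOrthogonalGroup (Fin (n * (n + 1) / 2)) ℝ)
    (x : Fin (n * (n + 1) / 2) → ℝ) (hx : ∀ α, 0 ≤ x α)
    (hdiag : Bc * Bcᵀ = Q * Matrix.diagonal x * Qᵀ)
    (Qhat : Fin (n * (n + 1) / 2) → Matrix (Fin n) (Fin n) ℝ)
    (hQhat : ∀ α, Qhat α = ∑ β, Q β α • Ehat β) :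
    (∑ r, frobSq (B r) = ∑ α, x α) ∧
      (∑ r, ∑ s, frobSq (matComm (B r) (B s)) =
        ∑ α, ∑ β, x α * x β * frobSq (matComm (Qhat α) (Qhat β))) := by
  -- orthogonality of Q
  have hQmem := (Matrix.mem_specialOrthogonalGroup_iff.mp hQ).1
  have hQQt : Q * Qᵀ = 1 := by
    have := Matrix.mem_orthogonalGroup_iff (Fin (n * (n + 1) / 2)) ℝ |>.mp hQmem
    simpa [Matrix.star_eq_conjTranspose, Matrix.conjTranspose_eq_transpose_of_trivial] using this
  have hQtQ : Qᵀ * Q = 1 := by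
    have := Matrix.mem_orthogonalGroup_iff' (Fin (n * (n + 1) / 2)) ℝ |>.mp hQmem
    simpa [Matrix.star_eq_conjTranspose, Matrix.conjTranspose_eq_transpose_of_trivial] using this
  set C : Matrix (Fin (n * (n + 1) / 2)) (Fin m) ℝ := Qᵀ * Bc with hCdef
  have hCt : Cᵀ = Bcᵀ * Q := by
    simp [hCdef, Matrix.transpose_mul]
  have hCC : C * Cᵀ = Matrix.diagonal x := by
    rw [hCdef, hCt]
    calc Qᵀ * Bc * (Bcᵀ * Q) = Qᵀ * (Bc * Bcᵀ) * Q := by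
          rw [Matrix.mul_assoc, Matrix.mul_assoc, Matrix.mul_assoc]
      _ = Qᵀ * (Q * Matrix.diagonal x * Qᵀ) * Q := by rw [hdiag]
      _ = (Qᵀ * Q) * Matrix.diagonal x * (Qᵀ * Q) := by
          simp only [Matrix.mul_assoc]
      _ = Matrix.diagonal x := by rw [hQtQ]; simp
  -- B r in terms of Qhat
  have hQC : Q * C = Bc := by
    rw [hCdef, ← Matrix.mul_assoc, hQQt, Matrix.one_mul]
  have hBQ : ∀ r, B r = ∑ α, C α r • Qhat α := by
    intro r
    rw [hBc]
    calc (∑ γ, Bc γ r • Ehat γ)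
        = ∑ γ, (∑ α, Q γ α * C α r) • Ehat γ := by
          apply Finset.sum_congr rfl; intro γ _
          rw [← hQC, Matrix.mul_apply]
      _ = ∑ γ, ∑ α, (C α r * Q γ α) • Ehat γ := by
          apply Finset.sum_congr rfl; intro γ _
          rw [Finset.sum_smul]
          exact Finset.sum_congr rfl fun α _ => by rw [mul_comm]
      _ = ∑ α, ∑ γ, (C α r * Q γ α) • Ehat γ := Finset.sum_comm
      _ = ∑ α, C α r • Qhat α := by
          apply Finset.sum_congr rfl; intro α _
          rw [hQhat, Finset.smul_sum]
          exact Finset.sum_congr rfl fun γ _ => by rw [smul_smul]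
  -- Qhat norms
  have hQhatSq : ∀ α, frobInner (Qhat α) (Qhat α) = 1 := by
    intro α
    rw [hQhat, frobInner_sum_left]
    have : ∀ β, frobInner (Q β α • Ehat β) (∑ γ, Q γ α • Ehat γ) = Q β α * Q β α := by
      intro β
      rw [frobInner_smul_left, frobInner_sum_right]
      have : ∀ γ, frobInner (Ehat β) (Q γ α • Ehat γ) = if β = γ then Q γ α else 0 := by
        intro γ
        rw [frobInner_smul_right, hEorth]
        by_cases h : β = γ <;> simp [h]
      rw [Finset.sum_congr rfl fun γ _ => this γ]
      simp [Finset.sum_ite_eq]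
    rw [Finset.sum_congr rfl fun β _ => this β]
    have : (∑ β, Q β α * Q β α) = (Qᵀ * Q) α α := by
      rw [Matrix.mul_apply]
      exact Finset.sum_congr rfl fun β _ => by simp [Matrix.transpose_apply]
    rw [this, hQtQ]
    simp
  constructor
  · -- first part
    have := core_lemma C x hCC Qhat B hBQ
    calc ∑ r, frobSq (B r) = ∑ r, frobInner (B r) (B r) :=
          Finset.sum_congr rfl fun r _ => frobSq_eq _
      _ = ∑ α, x α * frobInner (Qhat α) (Qhat α) := this
      _ = ∑ α, x α := by
          apply Finset.sum_congr rfl; intro α _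
          rw [hQhatSq]; ring
  · -- second part
    have step1 : ∀ s, ∑ r, frobSq (matComm (B r) (B s))
        = ∑ α, x α * frobInner (matComm (Qhat α) (B s)) (matComm (Qhat α) (B s)) := by
      intro s
      have hv : ∀ r, matComm (B r) (B s) = ∑ α, C α r • matComm (Qhat α) (B s) := by
        intro r
        rw [hBQ r, matComm_sum_left]
        exact Finset.sum_congr rfl fun α _ => matComm_smul_left _ _ _
      calc ∑ r, frobSq (matComm (B r) (B s))
          = ∑ r, frobInner (matComm (B r) (B s)) (matComm (B r) (B s)) :=
            Finset.sum_congr rfl fun r _ => frobSq_eq _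
        _ = _ := core_lemma C x hCC _ _ hv
    have step2 : ∀ α, ∑ s, frobInner (matComm (Qhat α) (B s)) (matComm (Qhat α) (B s))
        = ∑ β, x β * frobSq (matComm (Qhat α) (Qhat β)) := by
      intro α
      have hv : ∀ s, matComm (Qhat α) (B s) = ∑ β, C β s • matComm (Qhat α) (Qhat β) := by
        intro s
        rw [hBQ s, matComm_sum_right]
        exact Finset.sum_congr rfl fun β _ => matComm_smul_right _ _ _
      rw [core_lemma C x hCC _ _ hv]
      exact Finset.sum_congr rfl fun β _ => by rw [frobSq_eq]
    calc ∑ r, ∑ s, frobSq (matComm (B r) (B s))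
        = ∑ s, ∑ r, frobSq (matComm (B r) (B s)) := Finset.sum_comm
      _ = ∑ s, ∑ α, x α * frobInner (matComm (Qhat α) (B s)) (matComm (Qhat α) (B s)) :=
          Finset.sum_congr rfl fun s _ => step1 s
      _ = ∑ α, ∑ s, x α * frobInner (matComm (Qhat α) (B s)) (matComm (Qhat α) (B s)) :=
          Finset.sum_comm
      _ = ∑ α, x α * ∑ s, frobInner (matComm (Qhat α) (B s)) (matComm (Qhat α) (B s)) := by
          exact Finset.sum_congr rfl fun α _ => (Finset.mul_sum _ _ _).symm
      _ = ∑ α, x α * ∑ β, x β * frobSq (matComm (Qhat α) (Qhat β)) := by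
          exact Finset.sum_congr rfl fun α _ => by rw [step2]
      _ = ∑ α, ∑ β, x α * x β * frobSq (matComm (Qhat α) (Qhat β)) := by
          apply Finset.sum_congr rfl; intro α _
          rw [Finset.mul_sum]
          exact Finset.sum_congr rfl fun β _ => by ring
end

section
/- Let n ≥ 2 and N = n(n+1)/2. Let {Ê_1, ..., Ê_N} be the standard orthonormal basis of the space of real symmetric n×n matrices: for each i, the matrix E_{ii} with (i,i)-entry 1 and all other entries 0, and for each i < j, the matrix (1/√2)(E_{ij} + E_{ji}), where E_{ij} has (i,j)-entry 1 and all other entries 0. Then for all reals x_1, ..., x_N with x_α > 0 for every α, the strict inequality Σ_{α,β=1}^N x_α x_β ‖[Ê_α, Ê_β]‖² < (Σ_{α=1}^N x_α)² holds. -/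
open Matrix BigOperators

/-- The standard orthonormal basis of the space of real symmetric `n × n` matrices,
indexed by pairs `(i, j)` with `i ≤ j`: `E_{ii}` on the diagonal indices, and
`(1/√2)(E_{ij} + E_{ji})` for `i < j`. -/
noncomputable def stdSymBasis (n : ℕ) (p : {q : Fin n × Fin n // q.1 ≤ q.2}) :
    Matrix (Fin n) (Fin n) ℝ :=
  if p.val.1 = p.val.2 then Matrix.single p.val.1 p.val.2 1
  else (1 / Real.sqrt 2) •
    (Matrix.single p.val.1 p.val.2 1 + Matrix.single p.val.2 p.val.1 1)

lemma mulE {n : ℕ} (a b c d : Fin n) :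
    single a b (1:ℝ) * single c d 1 =
      if b = c then single a d 1 else 0 := by
  split
  · next h => subst h; simp [Matrix.single_mul_single_same]
  · next h => exact Matrix.single_mul_single_of_ne (c := (1:ℝ)) a b c h 1

lemma frobSq_zero {n : ℕ} : frobSq (0 : Matrix (Fin n) (Fin n) ℝ) = 0 := by simp [frobSq]

lemma frobSq_neg {n : ℕ} (A : Matrix (Fin n) (Fin n) ℝ) : frobSq (-A) = frobSq A := by
  simp [frobSq]

lemma frobSq_form {n : ℕ} (a b : Fin n) (h : a ≠ b) (c : ℝ) :
    frobSq (c • (single a b 1 - single b a 1)) = 2 * c ^ 2 := by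
  have key : ∀ i j : Fin n,
      (((c • (single a b 1 - single b a 1)) : Matrix (Fin n) (Fin n) ℝ) i j) ^ 2
        = c ^ 2 * ((if i = a ∧ j = b then 1 else 0) + (if i = b ∧ j = a then 1 else 0)) := by
    intro i j
    simp only [Matrix.smul_apply, Matrix.sub_apply, Matrix.single, Matrix.of_apply,
      smul_eq_mul, eq_comm (a := a), eq_comm (a := b)]
    by_cases h1 : i = a ∧ j = b <;> by_cases h2 : i = b ∧ j = a
    · exact absurd ((h1.1.symm).trans h2.1) h
    · obtain ⟨rfl, rfl⟩ := h1; simp [h, Ne.symm h]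
    · obtain ⟨rfl, rfl⟩ := h2; simp [h, Ne.symm h]
    · simp only [if_neg h1, if_neg h2]; ring
  have hs : (∑ i, ∑ j, ((if i = a ∧ j = b then (1:ℝ) else 0)
      + (if i = b ∧ j = a then 1 else 0))) = 2 := by
    simp [Finset.sum_add_distrib, ite_and, Finset.sum_ite_eq']
    norm_num
  calc frobSq (c • (single a b 1 - single b a 1))
      = ∑ i, ∑ j, c ^ 2 * ((if i = a ∧ j = b then (1:ℝ) else 0)
          + (if i = b ∧ j = a then 1 else 0)) := by
        simp only [frobSq, key]
    _ = c ^ 2 * ∑ i, ∑ j, ((if i = a ∧ j = b then (1:ℝ) else 0)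
          + (if i = b ∧ j = a then 1 else 0)) := by
        simp [Finset.mul_sum]
    _ = 2 * c ^ 2 := by rw [hs]; ring

lemma inv_sqrt2_sq : (1 / Real.sqrt 2) * (1 / Real.sqrt 2) = 1 / 2 := by
  rw [div_mul_div_comm, one_mul, Real.mul_self_sqrt (by norm_num)]

-- diag vs offdiag
lemma bound_diag_off {n : ℕ} (i k l : Fin n) (hkl : k ≠ l) :
    frobSq (matComm (single i i (1:ℝ))
      ((1 / Real.sqrt 2) • (single k l 1 + single l k 1))) ≤ 1 := by
  by_cases h1 : i = k
  · subst h1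
    have : matComm (single i i (1:ℝ))
        ((1 / Real.sqrt 2) • (single i l 1 + single l i 1))
        = (1 / Real.sqrt 2) • (single i l 1 - single l i 1) := by
      simp [matComm, Matrix.mul_smul, Matrix.smul_mul, mul_add, add_mul, mulE, hkl, Ne.symm hkl,
        smul_sub, Matrix.smul_single, mul_one]
    rw [this, frobSq_form i l hkl]
    rw [sq, inv_sqrt2_sq]; norm_num
  · by_cases h2 : i = l
    · subst h2
      have : matComm (single i i (1:ℝ))
          ((1 / Real.sqrt 2) • (single k i 1 + single i k 1))
          = (1 / Real.sqrt 2) • (single i k 1 - single k i 1) := by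
        simp [matComm, Matrix.mul_smul, Matrix.smul_mul, mul_add, add_mul, mulE, hkl, Ne.symm hkl,
          smul_sub, Matrix.smul_single, mul_one]
      rw [this, frobSq_form i k (Ne.symm hkl)]
      rw [sq, inv_sqrt2_sq]; norm_num
    · have : matComm (single i i (1:ℝ))
          ((1 / Real.sqrt 2) • (single k l 1 + single l k 1)) = 0 := by
        simp [matComm, Matrix.mul_smul, Matrix.smul_mul, mul_add, add_mul, mulE,
          h1, h2, Ne.symm h1, Ne.symm h2]
      rw [this, frobSq_zero]; norm_num

lemma matComm_smul_smul {n : ℕ} (c d : ℝ) (A B : Matrix (Fin n) (Fin n) ℝ) :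
    matComm (c • A) (d • B) = (c * d) • matComm A B := by
  simp [matComm, Matrix.smul_mul, Matrix.mul_smul, smul_sub, smul_smul, mul_comm]

lemma frobSq_comm_swap {n : ℕ} (A B : Matrix (Fin n) (Fin n) ℝ) :
    frobSq (matComm A B) = frobSq (matComm B A) := by
  rw [show matComm A B = -(matComm B A) from (neg_sub _ _).symm, frobSq_neg]

lemma bound_off_off {n : ℕ} (i j k l : Fin n) (hij : i ≠ j) (hkl : k ≠ l) :
    frobSq (matComm ((1 / Real.sqrt 2) • (single i j (1:ℝ) + single j i 1))
      ((1 / Real.sqrt 2) • (single k l 1 + single l k 1))) ≤ 1 := by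
  rw [matComm_smul_smul, inv_sqrt2_sq]
  by_cases h1 : i = k
  · subst h1
    by_cases h2 : j = l
    · subst h2
      rw [show matComm (single i j (1:ℝ) + single j i 1)
          (single i j 1 + single j i 1) = 0 from sub_self _]
      rw [smul_zero, frobSq_zero]; norm_num
    · have hM : matComm (single i j (1:ℝ) + single j i 1)
          (single i l 1 + single l i 1)
          = single j l 1 - single l j 1 := by
        simp [matComm, mul_add, add_mul, mulE, hij, Ne.symm hij, hkl, Ne.symm hkl,
          h2, Ne.symm h2]
      rw [hM, frobSq_form j l h2]; norm_num
  · by_cases h2 : i = l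
    · subst h2
      by_cases h3 : j = k
      · subst h3
        rw [show single j i (1:ℝ) + single i j 1
            = single i j 1 + single j i 1 from add_comm _ _]
        rw [show matComm (single i j (1:ℝ) + single j i 1)
            (single i j 1 + single j i 1) = 0 from sub_self _]
        rw [smul_zero, frobSq_zero]; norm_num
      · have hM : matComm (single i j (1:ℝ) + single j i 1)
            (single k i 1 + single i k 1)
            = single j k 1 - single k j 1 := by
          simp [matComm, mul_add, add_mul, mulE, hij, Ne.symm hij, hkl, Ne.symm hkl,
            h3, Ne.symm h3]
        rw [hM, frobSq_form j k h3]; norm_num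
    · by_cases h3 : j = k
      · subst h3
        have hM : matComm (single i j (1:ℝ) + single j i 1)
            (single j l 1 + single l j 1)
            = single i l 1 - single l i 1 := by
          simp [matComm, mul_add, add_mul, mulE, hij, Ne.symm hij, hkl, Ne.symm hkl,
            h2, Ne.symm h2]
        rw [hM, frobSq_form i l h2]; norm_num
      · by_cases h4 : j = l
        · subst h4
          have hM : matComm (single i j (1:ℝ) + single j i 1)
              (single k j 1 + single j k 1)
              = single i k 1 - single k i 1 := by
            simp [matComm, mul_add, add_mul, mulE, hij, Ne.symm hij, hkl, Ne.symm hkl,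
              h1, Ne.symm h1]
          rw [hM, frobSq_form i k h1]; norm_num
        · have hM : matComm (single i j (1:ℝ) + single j i 1)
              (single k l 1 + single l k 1) = 0 := by
            simp [matComm, mul_add, add_mul, mulE, h1, h2, h3, h4,
              Ne.symm h1, Ne.symm h2, Ne.symm h3, Ne.symm h4]
          rw [hM, smul_zero, frobSq_zero]; norm_num

lemma key_bound {n : ℕ} (p q : {q : Fin n × Fin n // q.1 ≤ q.2}) :
    frobSq (matComm (stdSymBasis n p) (stdSymBasis n q)) ≤ 1 := by
  obtain ⟨⟨i, j⟩, hij⟩ := p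
  obtain ⟨⟨k, l⟩, hkl⟩ := q
  by_cases hd1 : i = j <;> by_cases hd2 : k = l
  · have e1 : stdSymBasis n ⟨(i, j), hij⟩ = single i i 1 := by
      simp [stdSymBasis, hd1]
    have e2 : stdSymBasis n ⟨(k, l), hkl⟩ = single k k 1 := by
      simp [stdSymBasis, hd2]
    rw [e1, e2]
    by_cases h : i = k
    · subst h
      rw [show matComm (single i i (1:ℝ)) (single i i 1) = 0 from sub_self _,
        frobSq_zero]
      norm_num
    · have : matComm (single i i (1:ℝ)) (single k k 1) = 0 := by
        simp [matComm, mulE, h, Ne.symm h]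
      rw [this, frobSq_zero]; norm_num
  · have e1 : stdSymBasis n ⟨(i, j), hij⟩ = single i i 1 := by
      simp [stdSymBasis, hd1]
    have e2 : stdSymBasis n ⟨(k, l), hkl⟩
        = (1 / Real.sqrt 2) • (single k l 1 + single l k 1) := by
      simp [stdSymBasis, hd2]
    rw [e1, e2]
    exact bound_diag_off i k l hd2
  · have e1 : stdSymBasis n ⟨(i, j), hij⟩
        = (1 / Real.sqrt 2) • (single i j 1 + single j i 1) := by
      simp [stdSymBasis, hd1]
    have e2 : stdSymBasis n ⟨(k, l), hkl⟩ = single k k 1 := by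
      simp [stdSymBasis, hd2]
    rw [e1, e2, frobSq_comm_swap]
    exact bound_diag_off k i j hd1
  · have e1 : stdSymBasis n ⟨(i, j), hij⟩
        = (1 / Real.sqrt 2) • (single i j 1 + single j i 1) := by
      simp [stdSymBasis, hd1]
    have e2 : stdSymBasis n ⟨(k, l), hkl⟩
        = (1 / Real.sqrt 2) • (single k l 1 + single l k 1) := by
      simp [stdSymBasis, hd2]
    rw [e1, e2]
    exact bound_off_off i j k l hd1 hd2


/-- For the standard orthonormal basis of symmetric matrices, the DDVV polynomial
inequality is strict on the positive orthant. -/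
theorem ddvv_strict_on_std_basis (n : ℕ) (hn : 2 ≤ n)
    (x : {q : Fin n × Fin n // q.1 ≤ q.2} → ℝ) (hx : ∀ p, 0 < x p) :
    ∑ p, ∑ q, x p * x q * frobSq (matComm (stdSymBasis n p) (stdSymBasis n q)) <
      (∑ p, x p) ^ 2 := by
  classical
  have hself : ∀ p : {q : Fin n × Fin n // q.1 ≤ q.2},
      frobSq (matComm (stdSymBasis n p) (stdSymBasis n p)) = 0 := by
    intro p
    rw [show matComm (stdSymBasis n p) (stdSymBasis n p) = 0 from sub_self _, frobSq_zero]
  have step1 : ∑ p, ∑ q, x p * x q * frobSq (matComm (stdSymBasis n p) (stdSymBasis n q))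
      ≤ ∑ p, ∑ q, (x p * x q - if q = p then x p * x q else 0) := by
    refine Finset.sum_le_sum fun p _ => Finset.sum_le_sum fun q _ => ?_
    by_cases hpq : q = p
    · subst hpq
      rw [hself q, if_pos rfl]
      simp
    · rw [if_neg hpq, sub_zero]
      calc x p * x q * frobSq (matComm (stdSymBasis n p) (stdSymBasis n q))
          ≤ x p * x q * 1 := by
            exact mul_le_mul_of_nonneg_left (key_bound p q)
              (le_of_lt (mul_pos (hx p) (hx q)))
        _ = x p * x q := mul_one _
  have step2 : ∑ p, ∑ q, (x p * x q - if q = p then x p * x q else 0)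
      = (∑ p, x p) ^ 2 - ∑ p, x p * x p := by
    have : ∀ p : {q : Fin n × Fin n // q.1 ≤ q.2},
        ∑ q, (x p * x q - if q = p then x p * x q else 0)
          = (∑ q, x p * x q) - x p * x p := by
      intro p
      rw [Finset.sum_sub_distrib, Finset.sum_ite_eq' Finset.univ p (fun q => x p * x q)]
      simp
    rw [Finset.sum_congr rfl fun p _ => this p, Finset.sum_sub_distrib]
    congr 1
    rw [sq, Finset.sum_mul_sum]
  have hne : Nonempty {q : Fin n × Fin n // q.1 ≤ q.2} := by
    have h0 : 0 < n := by omega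
    exact ⟨⟨(⟨0, h0⟩, ⟨0, h0⟩), le_refl _⟩⟩
  have hpos : 0 < ∑ p, x p * x p :=
    Finset.sum_pos (fun p _ => mul_pos (hx p) (hx p)) Finset.univ_nonempty
  calc ∑ p, ∑ q, x p * x q * frobSq (matComm (stdSymBasis n p) (stdSymBasis n q))
      ≤ (∑ p, x p) ^ 2 - ∑ p, x p * x p := step1.trans (le_of_eq step2)
    _ < (∑ p, x p) ^ 2 := by linarith
end
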